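/- Let (R, m) be a local ring, x ∈ R, R̄ = R/(x), and M a weakly liftable R̄-module of finite projective dimension over R such that for 2 ≤ k ≤ pd_R M − 1 the sequence 0 → Syz_{k-1}^{R̄}(M) → Syz_k^R(M)/x·Syz_k^R(M) → Syz_k^{R̄}(M) → 0 is split exact. Then the Betti numbers satisfy β_k^R(M) = β_{k-1}^{R̄}(M) + β_k^{R̄}(M) for 2 ≤ k ≤ pd_R M − 1. -/

import Mathlib

open CategoryTheory IsLocalRing Module Submodule Function

attribute [local instance] Ideal.Quotient.field

section CrossField
variable {K L : Type} [DivisionRing K] [DivisionRing L] (σ : K ≃+* L)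
  {V W : Type} [AddCommGroup V] [Module K V] [AddCommGroup W] [Module L W]

lemma crossField_finrank (e : V ≃+ W) (hc : ∀ (c : K) (v : V), e (c • v) = σ c • e v) :
    Module.finrank K V = Module.finrank L W := by
  letI : Module K W := Module.compHom W σ.toRingHom
  have hsm : ∀ (c : K) (w : W), c • w = σ c • w := fun c w => rfl
  let e' : V ≃ₗ[K] W := e.toLinearEquiv (fun c v => by rw [hc, hsm])
  have h1 : Module.finrank K V = Module.finrank K W := e'.finrank_eq
  have h2 : Module.rank K W = Module.rank L W := by
    let b := Basis.ofVectorSpace L W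
    let b' : Basis _ K W := b.mapCoeffs σ.symm (fun c x => by
      rw [hsm, σ.apply_symm_apply])
    rw [← b.mk_eq_rank'', ← b'.mk_eq_rank'']
  rw [h1]
  unfold Module.finrank
  rw [h2]

variable {R : Type} [CommRing R]

noncomputable def quotSmulTopEquivOfSurj (I : Ideal R) {F N : Type} [AddCommGroup F] [Module R F]
    [AddCommGroup N] [Module R N] (f : F →ₗ[R] N) (hs : Surjective f)
    (hk : LinearMap.ker f ≤ I • (⊤ : Submodule R F)) :
    (F ⧸ I • (⊤ : Submodule R F)) ≃ₗ[R] (N ⧸ I • (⊤ : Submodule R N)) := by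
  have hmap : (I • (⊤ : Submodule R F)).map f = I • (⊤ : Submodule R N) := by
    rw [Submodule.map_smul'', Submodule.map_top, LinearMap.range_eq_top.mpr hs]
  refine LinearEquiv.ofBijective
    (Submodule.mapQ (I • ⊤) (I • ⊤) f (Submodule.map_le_iff_le_comap.mp hmap.le)) ⟨?_, ?_⟩
  · rw [← LinearMap.ker_eq_bot, eq_bot_iff]
    intro v hv
    obtain ⟨v, rfl⟩ := Submodule.Quotient.mk_surjective _ v
    rw [LinearMap.mem_ker, Submodule.mapQ_apply, Submodule.Quotient.mk_eq_zero, ← hmap] at hv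
    obtain ⟨w, hw, hwv⟩ := hv
    have : v - w ∈ LinearMap.ker f := by simp [LinearMap.mem_ker, map_sub, hwv]
    have hv' : v ∈ I • (⊤ : Submodule R F) := by
      have := add_mem (hk this) hw
      simpa using this
    simpa [Submodule.Quotient.mk_eq_zero] using hv'
  · intro y
    obtain ⟨n, rfl⟩ := Submodule.Quotient.mk_surjective _ y
    obtain ⟨v, rfl⟩ := hs n
    exact ⟨Submodule.Quotient.mk v, by rw [Submodule.mapQ_apply]⟩

lemma finrank_free_eq_quot [IsLocalRing R] (F : Type) [AddCommGroup F] [Module R F]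
    [Module.Free R F] [Module.Finite R F] :
    Module.finrank R F
      = Module.finrank (R ⧸ maximalIdeal R) (F ⧸ maximalIdeal R • (⊤ : Submodule R F)) := by
  let e := (TensorProduct.quotTensorEquivQuotSMul F (maximalIdeal R)).extendScalarsOfSurjective
    (Ideal.Quotient.mk_surjective (I := maximalIdeal R))
  rw [← e.finrank_eq, Module.finrank_baseChange]

variable {R : Type} [CommRing R] [IsLocalRing R] (x : R)

lemma max_map (hxu : ¬ IsUnit x) [IsLocalRing (R ⧸ Ideal.span {x})] :
    maximalIdeal (R ⧸ Ideal.span {x})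
      = (maximalIdeal R).map (Ideal.Quotient.mk (Ideal.span {x})) := by
  have hxm : Ideal.span {x} ≤ maximalIdeal R := by
    rwa [Ideal.span_singleton_le_iff_mem, IsLocalRing.mem_maximalIdeal, mem_nonunits_iff]
  have hcomap : (maximalIdeal (R ⧸ Ideal.span {x})).comap (Ideal.Quotient.mk (Ideal.span {x}))
      = maximalIdeal R := by
    apply le_antisymm
    · apply IsLocalRing.le_maximalIdeal
      intro h
      have : (1 : R ⧸ Ideal.span {x}) ∈ maximalIdeal (R ⧸ Ideal.span {x}) := by
        have := h ▸ Submodule.mem_top (R := R) (x := (1 : R))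
        simpa using this
      exact (IsLocalRing.mem_maximalIdeal _).mp this isUnit_one
    · intro r hr
      rw [Ideal.mem_comap, IsLocalRing.mem_maximalIdeal, mem_nonunits_iff]
      intro hu
      obtain ⟨b, hb⟩ := isUnit_iff_exists_inv.mp hu
      obtain ⟨s, rfl⟩ := Ideal.Quotient.mk_surjective b
      rw [← map_mul, ← map_one (Ideal.Quotient.mk (Ideal.span {x})),
        Ideal.Quotient.mk_eq_mk_iff_sub_mem] at hb
      have h1 : (1 : R) ∈ maximalIdeal R := by
        have h2 : r * s - 1 ∈ maximalIdeal R := hxm hb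
        have h3 : r * s ∈ maximalIdeal R := Ideal.mul_mem_right _ _ hr
        simpa using sub_mem h3 h2
      exact ((maximalIdeal.isMaximal R).ne_top (Ideal.eq_top_iff_one _|>.mpr h1))
  rw [← hcomap, Ideal.map_comap_of_surjective _ Ideal.Quotient.mk_surjective]

variable {R : Type} [CommRing R] [IsLocalRing R] {x : R}

-- Lemma E
noncomputable def twoStageQuotEquiv (hx : x ∈ maximalIdeal R)
    (N : Type) [AddCommGroup N] [Module R N]
    (J : Ideal (R ⧸ Ideal.span {x}))
    (hJ : J = (maximalIdeal R).map (Ideal.Quotient.mk (Ideal.span {x}))) :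
    ((N ⧸ Ideal.span {x} • (⊤ : Submodule R N)) ⧸
        (J • (⊤ : Submodule (R ⧸ Ideal.span {x})
          (N ⧸ Ideal.span {x} • (⊤ : Submodule R N)))))
      ≃ₗ[R] (N ⧸ maximalIdeal R • (⊤ : Submodule R N)) := by
  set S := R ⧸ Ideal.span {x}
  set X : Submodule R N := Ideal.span {x} • ⊤
  set Q := N ⧸ X
  have hXm : X ≤ maximalIdeal R • (⊤ : Submodule R N) :=
    Submodule.smul_mono_left (by rwa [Ideal.span_singleton_le_iff_mem])
  have hres : (J • (⊤ : Submodule S Q)).restrictScalars R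
      = (maximalIdeal R • ⊤ : Submodule R Q) := by
    apply le_antisymm
    · intro q hq
      rw [Submodule.restrictScalars_mem] at hq
      refine Submodule.smul_induction_on hq ?_ ?_
      · intro s hs q' _
        rw [hJ] at hs
        obtain ⟨r, hr, rfl⟩ := Ideal.mem_map_iff_of_surjective _
          Ideal.Quotient.mk_surjective |>.mp hs
        have : (Ideal.Quotient.mk (Ideal.span {x}) r) • q' = r • q' := by
          rw [← Ideal.Quotient.algebraMap_eq, algebraMap_smul]
        rw [this]
        exact Submodule.smul_mem_smul hr trivial
      · intro a b ha hb; exact add_mem ha hb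
    · refine Submodule.smul_le.mpr ?_
      intro r hr q' _
      rw [Submodule.restrictScalars_mem]
      have : r • q' = (Ideal.Quotient.mk (Ideal.span {x}) r) • q' := by
        rw [← Ideal.Quotient.algebraMap_eq, algebraMap_smul]
      rw [this]
      exact Submodule.smul_mem_smul (hJ ▸ Ideal.mem_map_of_mem _ hr) trivial
  have hmapeq : (maximalIdeal R • (⊤ : Submodule R N)).map X.mkQ
      = (maximalIdeal R • ⊤ : Submodule R Q) := by
    rw [Submodule.map_smul'', Submodule.map_top, Submodule.range_mkQ]
  exact (Submodule.Quotient.restrictScalarsEquiv R (J • (⊤ : Submodule S Q))).symm.trans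
    ((Submodule.quotEquivOfEq _ _ hres).trans
      ((Submodule.quotEquivOfEq _ _ hmapeq.symm).trans
        (Submodule.quotientQuotientEquivQuotient X (maximalIdeal R • ⊤) hXm)))

variable {S : Type} [CommRing S] (I : Ideal S)

noncomputable def quotSmulTopCongr {V W : Type} [AddCommGroup V] [Module S V]
    [AddCommGroup W] [Module S W] (e : V ≃ₗ[S] W) :
    (V ⧸ I • (⊤ : Submodule S V)) ≃ₗ[S] (W ⧸ I • (⊤ : Submodule S W)) :=
  Submodule.Quotient.equiv _ _ e (by
    have h := Submodule.map_smul'' I (⊤ : Submodule S V) (e : V →ₗ[S] W)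
    rw [Submodule.map_top, LinearEquiv.range] at h
    exact h)

noncomputable def quotSmulTopProdEquiv (A B : Type) [AddCommGroup A] [Module S A]
    [AddCommGroup B] [Module S B] :
    ((A × B) ⧸ I • (⊤ : Submodule S (A × B)))
      ≃ₗ[S] (A ⧸ I • (⊤ : Submodule S A)) × (B ⧸ I • (⊤ : Submodule S B)) := by
  let φ : (A × B) →ₗ[S] (A ⧸ I • (⊤ : Submodule S A)) × (B ⧸ I • (⊤ : Submodule S B)) :=
    ((I • (⊤ : Submodule S A)).mkQ.comp (LinearMap.fst S A B)).prod
      ((I • (⊤ : Submodule S B)).mkQ.comp (LinearMap.snd S A B))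
  have hsurj : Surjective φ := by
    rintro ⟨a, b⟩
    obtain ⟨a, rfl⟩ := Submodule.Quotient.mk_surjective _ a
    obtain ⟨b, rfl⟩ := Submodule.Quotient.mk_surjective _ b
    exact ⟨(a, b), rfl⟩
  have hker : LinearMap.ker φ = I • (⊤ : Submodule S (A × B)) := by
    apply le_antisymm
    · intro v hv
      have h1 : v.1 ∈ I • (⊤ : Submodule S A) := by
        have := congrArg Prod.fst (LinearMap.mem_ker.mp hv)
        simpa [φ, Submodule.Quotient.mk_eq_zero] using this
      have h2 : v.2 ∈ I • (⊤ : Submodule S B) := by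
        have := congrArg Prod.snd (LinearMap.mem_ker.mp hv)
        simpa [φ, Submodule.Quotient.mk_eq_zero] using this
      have h1' := Submodule.mem_map_of_mem (f := LinearMap.inl S A B) h1
      rw [Submodule.map_smul''] at h1'
      have h2' := Submodule.mem_map_of_mem (f := LinearMap.inr S A B) h2
      rw [Submodule.map_smul''] at h2'
      have hv1 : ((v.1, 0) : A × B) ∈ I • (⊤ : Submodule S (A × B)) := by
        have := Submodule.smul_mono (le_refl I) (le_top (a := Submodule.map (LinearMap.inl S A B) ⊤)) h1'
        simpa using this
      have hv2 : ((0, v.2) : A × B) ∈ I • (⊤ : Submodule S (A × B)) := by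
        have := Submodule.smul_mono (le_refl I) (le_top (a := Submodule.map (LinearMap.inr S A B) ⊤)) h2'
        simpa using this
      have : v = (v.1, 0) + (0, v.2) := by simp
      rw [this]; exact add_mem hv1 hv2
    · refine Submodule.smul_le.mpr ?_
      intro s hs v _
      rw [LinearMap.mem_ker]
      have h1 : s • v.1 ∈ I • (⊤ : Submodule S A) := Submodule.smul_mem_smul hs trivial
      have h2 : s • v.2 ∈ I • (⊤ : Submodule S B) := Submodule.smul_mem_smul hs trivial
      have hφ : φ (s • v) = (Submodule.Quotient.mk (s • v.1), Submodule.Quotient.mk (s • v.2)) :=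
        rfl
      rw [hφ, Prod.mk_eq_zero]
      exact ⟨(Submodule.Quotient.mk_eq_zero _).mpr h1, (Submodule.Quotient.mk_eq_zero _).mpr h2⟩
  exact (Submodule.quotEquivOfEq _ _ hker.symm).trans (φ.quotKerEquivOfSurjective hsurj)
/-- A minimal free resolution `⋯ → F₁ → F₀ → M → 0` of a module `M`
over a local ring `R`. -/
structure MinFreeRes (R : Type) [CommRing R] [IsLocalRing R]
    (M : Type) [AddCommGroup M] [Module R M] : Type 1 where
  F : ℕ → ModuleCat R
  d : ∀ n, F (n + 1) ⟶ F n
  aug : F 0 ⟶ ModuleCat.of R M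
  free : ∀ n, Module.Free R (F n)
  fin : ∀ n, Module.Finite R (F n)
  aug_surj : Function.Surjective aug
  exact_aug : Function.Exact (d 0) aug
  exact : ∀ n, Function.Exact (d (n + 1)) (d n)
  min_aug : LinearMap.ker aug.hom ≤ (maximalIdeal R) • (⊤ : Submodule R (F 0))
  min : ∀ n, LinearMap.range (d n).hom ≤ (maximalIdeal R) • (⊤ : Submodule R (F n))

/-- `res.syz k` is the `(k+1)`-st syzygy module of the resolved module: the paper's
`Syz_k(M)` is `res.syz (k-1)` for `k ≥ 1`. -/
def MinFreeRes.syz {R : Type} [CommRing R] [IsLocalRing R]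
    {M : Type} [AddCommGroup M] [Module R M] (res : MinFreeRes R M) :
    ∀ k : ℕ, Submodule R (res.F k)
  | 0 => LinearMap.ker res.aug.hom
  | (k + 1) => LinearMap.ker (res.d k).hom

/-- `M` is weakly liftable along `x`: a direct summand of some `L/xL` with `x` a
non-zerodivisor on `L`. -/
structure WeakLifting (R : Type) [CommRing R] (x : R)
    (M : Type) [AddCommGroup M] [Module R M] : Type 1 where
  L : Type
  [acg : AddCommGroup L]
  [mod : Module R L]
  reg : ∀ l : L, x • l = 0 → l = 0
  incl : M →ₗ[R] (L ⧸ (Ideal.span {x} • (⊤ : Submodule R L)))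
  proj : (L ⧸ (Ideal.span {x} • (⊤ : Submodule R L))) →ₗ[R] M
  split : proj.comp incl = LinearMap.id

attribute [instance] WeakLifting.acg WeakLifting.mod

section ResLemmas
variable {R : Type} [CommRing R] [IsLocalRing R]
  {M : Type} [AddCommGroup M] [Module R M] (res : MinFreeRes R M)

lemma MinFreeRes.syz_eq_range (j : ℕ) : res.syz j = LinearMap.range (res.d j).hom := by
  cases j with
  | zero => exact (LinearMap.exact_iff.mp res.exact_aug)
  | succ j => exact (LinearMap.exact_iff.mp (res.exact j))

lemma MinFreeRes.finrank_F_eq (j : ℕ) :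
    Module.finrank R (res.F (j + 1))
      = Module.finrank (R ⧸ maximalIdeal R)
          ((res.syz j) ⧸ (maximalIdeal R • (⊤ : Submodule R (res.syz j)))) := by
  haveI := res.free (j + 1)
  haveI := res.fin (j + 1)
  -- the corestriction of d j onto syz j
  have hmem : ∀ v : res.F (j + 1), res.d j v ∈ res.syz j := by
    intro v; rw [res.syz_eq_range]; exact LinearMap.mem_range_self _ v
  let f : res.F (j + 1) →ₗ[R] res.syz j := LinearMap.codRestrict _ (res.d j).hom hmem
  have hs : Function.Surjective f := by
    rintro ⟨y, hy⟩
    rw [res.syz_eq_range] at hy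
    obtain ⟨v, hv⟩ := hy
    exact ⟨v, Subtype.ext hv⟩
  have hk : LinearMap.ker f ≤ maximalIdeal R • (⊤ : Submodule R (res.F (j + 1))) := by
    intro v hv
    have : res.d j v = 0 := by
      have := congrArg Subtype.val (LinearMap.mem_ker.mp hv)
      simpa [f] using this
    have : v ∈ res.syz (j + 1) := this
    rw [res.syz_eq_range] at this
    exact res.min (j + 1) this
  let e := (quotSmulTopEquivOfSurj (maximalIdeal R) f hs hk).extendScalarsOfSurjective
    (Ideal.Quotient.mk_surjective (I := maximalIdeal R))
  rw [finrank_free_eq_quot (res.F (j+1)), e.finrank_eq]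

end ResLemmas


set_option maxHeartbeats 2000000 in
set_option synthInstance.maxHeartbeats 1000000 in
/-- Let `(R,m)` be a Noetherian local ring, `x` a non-zerodivisor and
non-unit, `R̄ = R/(x)`, and `M` a weakly liftable `R̄`-module of finite projective dimension
`p` over `R` such that for `2 ≤ k ≤ p − 1` the sequence
`0 → Syz_{k-1}^{R̄}(M) → Syz_k^R(M)/x·Syz_k^R(M) → Syz_k^{R̄}(M) → 0` is split exact
(so the middle term is isomorphic to the direct sum of the outer ones).  Then the Betti
numbers satisfy `β_k^R(M) = β_{k-1}^{R̄}(M) + β_k^{R̄}(M)` for `2 ≤ k ≤ p − 1`. -/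
theorem stmt10 (R : Type) [CommRing R] [IsNoetherianRing R] [IsLocalRing R]
    (x : R) (hx : x ∈ nonZeroDivisors R) (hxu : ¬IsUnit x)
    [IsLocalRing (R ⧸ Ideal.span {x})]
    (M : Type) [AddCommGroup M] [Module R M] [Module.Finite R M]
    [Module (R ⧸ Ideal.span {x}) M] [IsScalarTower R (R ⧸ Ideal.span {x}) M]
    (hwl : Nonempty (WeakLifting R x M))
    (res : MinFreeRes R M) (resb : MinFreeRes (R ⧸ Ideal.span {x}) M)
    (p : ℕ) (hlen : ∀ k : ℕ, p < k → Subsingleton (res.F k))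
    (htop : Nontrivial (res.F p))
    (hsplit : ∀ k : ℕ, 2 ≤ k → k ≤ p - 1 →
      Nonempty
        (((res.syz (k - 1)) ⧸
            ((Ideal.span {x} : Ideal R) • (⊤ : Submodule R (res.syz (k - 1)))))
          ≃ₗ[R ⧸ Ideal.span {x}]
         ((resb.syz (k - 2)) × (resb.syz (k - 1))))) :
    ∀ k : ℕ, 2 ≤ k → k ≤ p - 1 →
      Module.finrank R (res.F k)
        = Module.finrank (R ⧸ Ideal.span {x}) (resb.F (k - 1))
          + Module.finrank (R ⧸ Ideal.span {x}) (resb.F k) := by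
  intro k hk2 hk1
  obtain ⟨j, rfl⟩ : ∃ j, k = j + 2 := ⟨k - 2, by omega⟩
  obtain ⟨esp⟩ := hsplit (j + 2) (by omega) hk1
  have hxm : x ∈ maximalIdeal R := by
    rwa [IsLocalRing.mem_maximalIdeal, mem_nonunits_iff]
  have hle : Ideal.span {x} ≤ maximalIdeal R := by
    rwa [Ideal.span_singleton_le_iff_mem]
  have hJ : maximalIdeal (R ⧸ Ideal.span {x})
      = (maximalIdeal R).map (Ideal.Quotient.mk (Ideal.span {x})) := max_map x hxu
  set N : Submodule R (res.F (j + 1)) := res.syz (j + 1) with hN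
  -- Step 1 : LHS
  have step1 : Module.finrank R (res.F (j + 2))
      = Module.finrank (R ⧸ maximalIdeal R)
          ((N : Type) ⧸ (maximalIdeal R • (⊤ : Submodule R N))) :=
    res.finrank_F_eq (j + 1)
  -- residue field iso
  let σ : (R ⧸ maximalIdeal R) ≃+* ((R ⧸ Ideal.span {x}) ⧸ maximalIdeal (R ⧸ Ideal.span {x})) :=
    (DoubleQuot.quotQuotEquivQuotOfLE hle).symm.trans (Ideal.quotEquivOfEq hJ.symm)
  have hσ : ∀ r : R, σ (Ideal.Quotient.mk (maximalIdeal R) r)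
      = Ideal.Quotient.mk (maximalIdeal (R ⧸ Ideal.span {x}))
          (Ideal.Quotient.mk (Ideal.span {x}) r) := by
    intro r
    simp only [σ, RingEquiv.trans_apply, DoubleQuot.quotQuotEquivQuotOfLE_symm_mk,
      Ideal.quotEquivOfEq_mk, DoubleQuot.quotQuotMk, RingHom.comp_apply]
  -- Step 2 : cross-field comparison with Q := N / xN
  let eQ := twoStageQuotEquiv hxm N (maximalIdeal (R ⧸ Ideal.span {x})) hJ
  have step2 : Module.finrank (R ⧸ maximalIdeal R)
        ((N : Type) ⧸ (maximalIdeal R • (⊤ : Submodule R N)))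
      = Module.finrank ((R ⧸ Ideal.span {x}) ⧸ maximalIdeal (R ⧸ Ideal.span {x}))
          (((N : Type) ⧸ (Ideal.span {x} • (⊤ : Submodule R N))) ⧸
            (maximalIdeal (R ⧸ Ideal.span {x}) • (⊤ : Submodule (R ⧸ Ideal.span {x})
              ((N : Type) ⧸ (Ideal.span {x} • (⊤ : Submodule R N)))))) := by
    have hc : ∀ (c : R ⧸ maximalIdeal R) (v : (N : Type) ⧸ (maximalIdeal R • (⊤ : Submodule R N))),
        eQ.symm.toAddEquiv (c • v) = σ c • eQ.symm.toAddEquiv v := by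
      intro c v
      obtain ⟨r, rfl⟩ := Ideal.Quotient.mk_surjective c
      have h1 : (Ideal.Quotient.mk (maximalIdeal R) r) • v = r • v := by
        rw [← Ideal.Quotient.algebraMap_eq, algebraMap_smul]
      have h2 : ∀ w : (((N : Type) ⧸ (Ideal.span {x} • (⊤ : Submodule R N))) ⧸
              (maximalIdeal (R ⧸ Ideal.span {x}) • (⊤ : Submodule (R ⧸ Ideal.span {x})
                ((N : Type) ⧸ (Ideal.span {x} • (⊤ : Submodule R N)))))),
          (Ideal.Quotient.mk (maximalIdeal (R ⧸ Ideal.span {x}))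
            (Ideal.Quotient.mk (Ideal.span {x}) r)) • w = r • w := by
        intro w
        rw [← Ideal.Quotient.algebraMap_eq, algebraMap_smul, ← Ideal.Quotient.algebraMap_eq,
          algebraMap_smul]
      rw [hσ r, h1, h2]
      exact eQ.symm.map_smul r v
    exact crossField_finrank σ eQ.symm.toAddEquiv hc
  -- Step 3 : use the split exactness
  have step3 : Module.finrank ((R ⧸ Ideal.span {x}) ⧸ maximalIdeal (R ⧸ Ideal.span {x}))
          (((N : Type) ⧸ (Ideal.span {x} • (⊤ : Submodule R N))) ⧸
            (maximalIdeal (R ⧸ Ideal.span {x}) • (⊤ : Submodule (R ⧸ Ideal.span {x})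
              ((N : Type) ⧸ (Ideal.span {x} • (⊤ : Submodule R N))))))
      = Module.finrank ((R ⧸ Ideal.span {x}) ⧸ maximalIdeal (R ⧸ Ideal.span {x}))
          ((resb.syz j : Type) ⧸ (maximalIdeal (R ⧸ Ideal.span {x}) •
            (⊤ : Submodule (R ⧸ Ideal.span {x}) (resb.syz j))))
        + Module.finrank ((R ⧸ Ideal.span {x}) ⧸ maximalIdeal (R ⧸ Ideal.span {x}))
          ((resb.syz (j+1) : Type) ⧸ (maximalIdeal (R ⧸ Ideal.span {x}) •
            (⊤ : Submodule (R ⧸ Ideal.span {x}) (resb.syz (j+1))))) := by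
    haveI : IsNoetherianRing (R ⧸ Ideal.span {x}) := Ideal.Quotient.isNoetherianRing _
    haveI := resb.fin j
    haveI := resb.fin (j + 1)
    haveI : Module.Finite (R ⧸ Ideal.span {x}) (resb.syz j) :=
      Module.Finite.iff_fg.mpr (IsNoetherian.noetherian _)
    haveI : Module.Finite (R ⧸ Ideal.span {x}) (resb.syz (j+1)) :=
      Module.Finite.iff_fg.mpr (IsNoetherian.noetherian _)
    haveI : Module.Finite (R ⧸ Ideal.span {x}) ((resb.syz j : Type) ⧸
        (maximalIdeal (R ⧸ Ideal.span {x}) •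
          (⊤ : Submodule (R ⧸ Ideal.span {x}) (resb.syz j)))) :=
      Module.Finite.of_surjective (maximalIdeal (R ⧸ Ideal.span {x}) •
          (⊤ : Submodule (R ⧸ Ideal.span {x}) (resb.syz j))).mkQ
        (Submodule.Quotient.mk_surjective _)
    haveI : Module.Finite (R ⧸ Ideal.span {x}) ((resb.syz (j+1) : Type) ⧸
        (maximalIdeal (R ⧸ Ideal.span {x}) •
          (⊤ : Submodule (R ⧸ Ideal.span {x}) (resb.syz (j+1))))) :=
      Module.Finite.of_surjective (maximalIdeal (R ⧸ Ideal.span {x}) •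
          (⊤ : Submodule (R ⧸ Ideal.span {x}) (resb.syz (j+1)))).mkQ
        (Submodule.Quotient.mk_surjective _)
    haveI : Module.Finite ((R ⧸ Ideal.span {x}) ⧸ maximalIdeal (R ⧸ Ideal.span {x}))
        ((resb.syz j : Type) ⧸ (maximalIdeal (R ⧸ Ideal.span {x}) •
          (⊤ : Submodule (R ⧸ Ideal.span {x}) (resb.syz j)))) :=
      Module.Finite.of_restrictScalars_finite (R ⧸ Ideal.span {x}) _ _
    haveI : Module.Finite ((R ⧸ Ideal.span {x}) ⧸ maximalIdeal (R ⧸ Ideal.span {x}))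
        ((resb.syz (j+1) : Type) ⧸ (maximalIdeal (R ⧸ Ideal.span {x}) •
          (⊤ : Submodule (R ⧸ Ideal.span {x}) (resb.syz (j+1))))) :=
      Module.Finite.of_restrictScalars_finite (R ⧸ Ideal.span {x}) _ _
    let e1 := (quotSmulTopCongr (maximalIdeal (R ⧸ Ideal.span {x})) esp).extendScalarsOfSurjective
      (Ideal.Quotient.mk_surjective (I := maximalIdeal (R ⧸ Ideal.span {x})))
    let e2 := (quotSmulTopProdEquiv (maximalIdeal (R ⧸ Ideal.span {x})) (resb.syz j)
        (resb.syz (j+1))).extendScalarsOfSurjective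
      (Ideal.Quotient.mk_surjective (I := maximalIdeal (R ⧸ Ideal.span {x})))
    exact e1.finrank_eq.trans (e2.finrank_eq.trans Module.finrank_prod)
  -- Steps 4, 5 : the Betti numbers of resb
  have step4 := resb.finrank_F_eq j
  have step5 := resb.finrank_F_eq (j + 1)
  show Module.finrank R (res.F (j + 2))
      = Module.finrank (R ⧸ Ideal.span {x}) (resb.F (j + 1))
        + Module.finrank (R ⧸ Ideal.span {x}) (resb.F (j + 2))
  rw [step1, step2, step3, step4, step5]
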